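/- Suppose b ∈ ℝ^m satisfies |b(i)| ≤ 1 for all i and b(1) ≥ b(2) ≥ … ≥ b(m). Then the supervertex q* = Σ_{i=0}^m b'(i)·e_{μ_i} lies in P(b) and is a vertex (extreme point) of P(b). -/

import Mathlib

open Finset

/-- The value λ(k) for λ ∈ Λ = {0,1}^m, extended by the conventions λ(0) = 0 and
λ(m+1) = 1 (positions 1,…,m carry the actual values of λ). -/
def lamExt (m : ℕ) (lam : Fin m → Bool) (k : ℕ) : ℕ :=
  if h : 1 ≤ k ∧ k ≤ m then (if lam ⟨k - 1, by omega⟩ then 1 else 0)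
  else if k = 0 then 0 else 1

/-- The vector ℓ_i ∈ ℝ^Λ, ℓ_i(λ) = (−1)^{λ(i)}, for 0 ≤ i ≤ m. -/
def ell (m : ℕ) (i : ℕ) (lam : Fin m → Bool) : ℝ := (-1) ^ lamExt m lam i

/-- The standard inner product on ℝ^Λ. -/
def ip (m : ℕ) (x y : (Fin m → Bool) → ℝ) : ℝ := ∑ lam : Fin m → Bool, x lam * y lam

/-- The polytope P(b). -/
def Pb (m : ℕ) (b : ℕ → ℝ) : Set ((Fin m → Bool) → ℝ) :=
  {x | ip m (ell m 0) x = 1 ∧ (∀ i ∈ Finset.Icc 1 m, ip m (ell m i) x = b i) ∧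
    ∀ lam, 0 ≤ x lam}

/-- b extended by the conventions b(0) = 1 and b(m+1) = −1. -/
noncomputable def bext (m : ℕ) (b : ℕ → ℝ) (k : ℕ) : ℝ :=
  if k = 0 then 1 else if k ≤ m then b k else -1

/-- b'(i) = (b(i) − b(i+1))/2 for 0 ≤ i ≤ m. -/
noncomputable def b' (m : ℕ) (b : ℕ → ℝ) (i : ℕ) : ℝ :=
  (bext m b i - bext m b (i + 1)) / 2

/-- μ_i ∈ Λ: μ_i(k) = 0 for k ≤ i, μ_i(k) = 1 for k ≥ i+1. -/
def mu (m i : ℕ) : Fin m → Bool := fun k => decide (i ≤ (k : ℕ))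

/-- The supervertex q* = Σ_{i=0}^m b'(i)·e_{μ_i} (decreasing case). -/
noncomputable def supervertexDec (m : ℕ) (b : ℕ → ℝ) : (Fin m → Bool) → ℝ :=
  fun lam => ∑ i ∈ Finset.range (m + 1), b' m b i * (if lam = mu m i then 1 else 0)

lemma ell_zero (m : ℕ) (lam : Fin m → Bool) : ell m 0 lam = 1 := by
  simp [ell, lamExt]

lemma mu_inj (m : ℕ) {i j : ℕ} (hi : i ≤ m) (hj : j ≤ m) (h : mu m i = mu m j) : i = j := by
  by_contra hne
  rcases Nat.lt_or_ge i j with hlt | hge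
  · have hm : i < m := lt_of_lt_of_le hlt hj
    have := congrFun h ⟨i, hm⟩
    simp [mu] at this; omega
  · have hlt : j < i := by omega
    have hm : j < m := lt_of_lt_of_le hlt hi
    have := congrFun h ⟨j, hm⟩
    simp [mu] at this; omega

lemma ell_mu (m n j : ℕ) (h1 : 1 ≤ n) (h2 : n ≤ m) :
    ell m n (mu m j) = if j < n then -1 else 1 := by
  rw [ell, lamExt, dif_pos ⟨h1, h2⟩]
  by_cases hj : j < n
  · rw [if_pos hj]
    have : mu m j ⟨n - 1, by omega⟩ = true := by simp [mu]; omega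
    rw [this]; norm_num
  · rw [if_neg hj]
    have : mu m j ⟨n - 1, by omega⟩ = false := by simp [mu]; omega
    rw [this]; norm_num

lemma supervertex_apply_mu (m : ℕ) (b : ℕ → ℝ) {i : ℕ} (hi : i ≤ m) :
    supervertexDec m b (mu m i) = b' m b i := by
  rw [supervertexDec, Finset.sum_eq_single i]
  · simp
  · intro j hj hne
    rw [if_neg, mul_zero]
    intro h
    exact hne (mu_inj m hi (Nat.lt_succ_iff.mp (Finset.mem_range.mp hj)) h).symm
  · intro h; exact absurd (Finset.mem_range.mpr (by omega)) h

lemma supervertex_apply_off (m : ℕ) (b : ℕ → ℝ) (lam : Fin m → Bool)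
    (h : ∀ i ≤ m, lam ≠ mu m i) : supervertexDec m b lam = 0 := by
  rw [supervertexDec]
  apply Finset.sum_eq_zero
  intro i hi
  rw [if_neg (h i (Nat.lt_succ_iff.mp (Finset.mem_range.mp hi))), mul_zero]

lemma ip_supported (m : ℕ) (y x : (Fin m → Bool) → ℝ)
    (hsupp : ∀ lam, (∀ i ≤ m, lam ≠ mu m i) → x lam = 0) :
    ip m y x = ∑ j ∈ Finset.range (m + 1), y (mu m j) * x (mu m j) := by
  have hinj : ∀ a ∈ Finset.range (m + 1), ∀ b ∈ Finset.range (m + 1),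
      mu m a = mu m b → a = b := by
    intro a ha b hb h
    exact mu_inj m (Nat.lt_succ_iff.mp (Finset.mem_range.mp ha))
      (Nat.lt_succ_iff.mp (Finset.mem_range.mp hb)) h
  have himg : ∑ lam ∈ (Finset.range (m + 1)).image (mu m), y lam * x lam
      = ∑ j ∈ Finset.range (m + 1), y (mu m j) * x (mu m j) :=
    Finset.sum_image hinj
  rw [ip, ← himg]
  refine (Finset.sum_subset (Finset.subset_univ _) ?_).symm
  intro lam _ hlam
  have : x lam = 0 := by
    apply hsupp
    intro i hi hne
    exact hlam (Finset.mem_image.mpr ⟨i, Finset.mem_range.mpr (by omega), hne.symm⟩)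
  rw [this, mul_zero]

lemma sum_b' (m : ℕ) (b : ℕ → ℝ) (n : ℕ) :
    ∑ j ∈ Finset.range n, b' m b j = (1 - bext m b n) / 2 := by
  induction n with
  | zero => simp [bext]
  | succ n ih =>
      rw [Finset.sum_range_succ, ih, b']; ring

lemma bext_top (m : ℕ) (b : ℕ → ℝ) : bext m b (m + 1) = -1 := by
  rw [bext, if_neg (by omega), if_neg (by omega)]

lemma bext_mid (m : ℕ) (b : ℕ → ℝ) {n : ℕ} (h1 : 1 ≤ n) (h2 : n ≤ m) :
    bext m b n = b n := by
  rw [bext, if_neg (by omega), if_pos h2]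

lemma b'_nonneg (m : ℕ) (b : ℕ → ℝ) (hb : ∀ i ∈ Finset.Icc 1 m, |b i| ≤ 1)
    (hdec : ∀ i j, 1 ≤ i → i ≤ j → j ≤ m → b j ≤ b i) (i : ℕ) : 0 ≤ b' m b i := by
  have hb' : ∀ k, 1 ≤ k → k ≤ m → -1 ≤ b k ∧ b k ≤ 1 := fun k h1 h2 =>
    abs_le.mp (hb k (Finset.mem_Icc.mpr ⟨h1, h2⟩))
  have e : ∀ k, ¬ k = 0 → ¬ k ≤ m → bext m b k = -1 := fun k hk hk' => by
    rw [bext, if_neg hk, if_neg hk']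
  rw [b']
  rcases Nat.eq_zero_or_pos i with rfl | hi
  · rw [show bext m b 0 = 1 from by simp [bext]]
    by_cases h : 1 ≤ m
    · rw [bext_mid m b le_rfl h]; linarith [(hb' 1 le_rfl h).2]
    · rw [e 1 one_ne_zero (by omega)]; norm_num
  · by_cases h1 : i ≤ m
    · rw [bext_mid m b hi h1]
      by_cases h2 : i + 1 ≤ m
      · rw [bext_mid m b (by omega) h2]; linarith [hdec i (i + 1) hi (by omega) h2]
      · rw [e (i + 1) (by omega) h2]; linarith [(hb' i hi h1).1]
    · rw [e i (by omega) h1, e (i + 1) (by omega) (by omega)]; norm_num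

lemma sum_signed (m : ℕ) (c : ℕ → ℝ) (n : ℕ) (hn : n ≤ m + 1) :
    ∑ j ∈ Finset.range (m + 1), (if j < n then (-1 : ℝ) else 1) * c j
      = ∑ j ∈ Finset.range (m + 1), c j - 2 * ∑ j ∈ Finset.range n, c j := by
  rw [← Finset.sum_range_add_sum_Ico _ hn,
    ← Finset.sum_range_add_sum_Ico c hn]
  have e1 : ∑ j ∈ Finset.range n, (if j < n then (-1 : ℝ) else 1) * c j
      = ∑ j ∈ Finset.range n, -(c j) := by
    refine Finset.sum_congr rfl fun j hj => ?_
    rw [if_pos (Finset.mem_range.mp hj)]; ring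
  have e2 : ∑ j ∈ Finset.Ico n (m + 1), (if j < n then (-1 : ℝ) else 1) * c j
      = ∑ j ∈ Finset.Ico n (m + 1), c j := by
    refine Finset.sum_congr rfl fun j hj => ?_
    rw [if_neg (by have := Finset.mem_Ico.mp hj; omega)]; ring
  rw [e1, e2, Finset.sum_neg_distrib]; ring

lemma unique_in_Pb (m : ℕ) (b : ℕ → ℝ) (x : (Fin m → Bool) → ℝ) (hx : x ∈ Pb m b)
    (hsupp : ∀ lam, (∀ i ≤ m, lam ≠ mu m i) → x lam = 0) :
    ∀ i ≤ m, x (mu m i) = b' m b i := by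
  obtain ⟨h0, hIcc, _⟩ := hx
  set c : ℕ → ℝ := fun j => x (mu m j) with hc
  have htot : ∑ j ∈ Finset.range (m + 1), c j = 1 := by
    rw [ip_supported m _ x hsupp] at h0
    calc ∑ j ∈ Finset.range (m + 1), c j
        = ∑ j ∈ Finset.range (m + 1), ell m 0 (mu m j) * c j := by
          refine Finset.sum_congr rfl fun j _ => ?_
          rw [ell_zero, one_mul]
      _ = 1 := h0
  have hS : ∀ n, 1 ≤ n → n ≤ m → ∑ j ∈ Finset.range n, c j = (1 - b n) / 2 := by
    intro n h1 h2
    have heq := hIcc n (Finset.mem_Icc.mpr ⟨h1, h2⟩)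
    rw [ip_supported m _ x hsupp] at heq
    have hterm : ∑ j ∈ Finset.range (m + 1), ell m n (mu m j) * c j
        = ∑ j ∈ Finset.range (m + 1), (if j < n then (-1 : ℝ) else 1) * c j :=
      Finset.sum_congr rfl fun j _ => by rw [ell_mu m n j h1 h2]
    rw [hterm, sum_signed m c n (by omega), htot] at heq
    linarith
  have key : ∀ n ≤ m + 1, ∑ j ∈ Finset.range n, c j = (1 - bext m b n) / 2 := by
    intro n hn
    rcases Nat.eq_zero_or_pos n with rfl | h1
    · simp [bext]
    · rcases Nat.lt_or_ge n (m + 1) with h2 | h2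
      · rw [hS n h1 (by omega), bext_mid m b h1 (by omega)]
      · have hnm : n = m + 1 := by omega
        subst hnm
        rw [htot, bext_top]; norm_num
  intro i hi
  have k1 := key i (by omega)
  have k2 := key (i + 1) (by omega)
  rw [Finset.sum_range_succ, k1] at k2
  have : c i = (bext m b i - bext m b (i + 1)) / 2 := by linarith
  rw [b']
  exact this

/-- If |b(i)| ≤ 1 for all i and b is decreasing, the supervertex q* lies in P(b)
and is a vertex (extreme point) of P(b). -/
theorem stmt9 (m : ℕ) (b : ℕ → ℝ) (hb : ∀ i ∈ Finset.Icc 1 m, |b i| ≤ 1)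
    (hdec : ∀ i j, 1 ≤ i → i ≤ j → j ≤ m → b j ≤ b i) :
    supervertexDec m b ∈ Pb m b ∧
      supervertexDec m b ∈ Set.extremePoints ℝ (Pb m b) := by
  have hqsupp : ∀ lam, (∀ i ≤ m, lam ≠ mu m i) → supervertexDec m b lam = 0 :=
    fun lam h => supervertex_apply_off m b lam h
  have hmem : supervertexDec m b ∈ Pb m b := by
    refine ⟨?_, ?_, ?_⟩
    · rw [ip_supported m _ _ hqsupp]
      have : ∀ j ∈ Finset.range (m + 1),
          ell m 0 (mu m j) * supervertexDec m b (mu m j) = b' m b j := by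
        intro j hj
        rw [ell_zero, supervertex_apply_mu m b (Nat.lt_succ_iff.mp (Finset.mem_range.mp hj)),
          one_mul]
      rw [Finset.sum_congr rfl this, sum_b', bext_top]; norm_num
    · intro n hn
      obtain ⟨h1, h2⟩ := Finset.mem_Icc.mp hn
      rw [ip_supported m _ _ hqsupp]
      have : ∀ j ∈ Finset.range (m + 1),
          ell m n (mu m j) * supervertexDec m b (mu m j)
            = (if j < n then (-1 : ℝ) else 1) * b' m b j := by
        intro j hj
        rw [ell_mu m n j h1 h2,
          supervertex_apply_mu m b (Nat.lt_succ_iff.mp (Finset.mem_range.mp hj))]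
      rw [Finset.sum_congr rfl this, sum_signed m _ n (by omega), sum_b', sum_b',
        bext_top, bext_mid m b h1 h2]
      ring
    · intro lam
      apply Finset.sum_nonneg
      intro i _
      apply mul_nonneg (b'_nonneg m b hb hdec i)
      split <;> norm_num
  refine ⟨hmem, ?_⟩
  refine ⟨hmem, ?_⟩
  intro x₁ hx₁ x₂ hx₂ hseg
  obtain ⟨a, c, ha, hc, hac, hsum⟩ := hseg
  have hzero : ∀ lam, (∀ i ≤ m, lam ≠ mu m i) → x₁ lam = 0 ∧ x₂ lam = 0 := by
    intro lam h
    have h0 : a * x₁ lam + c * x₂ lam = 0 := by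
      have := congrFun hsum lam
      simp only [Pi.add_apply, Pi.smul_apply, smul_eq_mul] at this
      rw [supervertex_apply_off m b lam h] at this
      exact this
    have h1 := hx₁.2.2 lam
    have h2 := hx₂.2.2 lam
    have hau : a * x₁ lam = 0 := by nlinarith [mul_nonneg ha.le h1, mul_nonneg hc.le h2]
    have hcv : c * x₂ lam = 0 := by nlinarith [mul_nonneg ha.le h1, mul_nonneg hc.le h2]
    exact ⟨(mul_eq_zero.mp hau).resolve_left (ne_of_gt ha),
      (mul_eq_zero.mp hcv).resolve_left (ne_of_gt hc)⟩
  have heq : ∀ (x : (Fin m → Bool) → ℝ), x ∈ Pb m b →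
      (∀ lam, (∀ i ≤ m, lam ≠ mu m i) → x lam = 0) → x = supervertexDec m b := by
    intro x hx hxs
    funext lam
    by_cases h : ∀ i ≤ m, lam ≠ mu m i
    · rw [hxs lam h, supervertex_apply_off m b lam h]
    · push_neg at h
      obtain ⟨i, hi, he⟩ := h
      rw [he, supervertex_apply_mu m b hi, unique_in_Pb m b x hx hxs i hi]
  exact heq x₁ hx₁ (fun l hl => (hzero l hl).1)
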